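/- Let A, B be self-adjoint operators on a finite-dimensional Hilbert space and T a completely positive trace-preserving map. Then Tr[{T(A) ≥ T(B)} (T(A) − T(B))] ≤ Tr[{A ≥ B}(A − B)], i.e., the 'positive-part trace' Tr[(A−B)₊-projected difference] is non-increasing under CPTP maps. -/

import Mathlib

open Matrix Kronecker BigOperators
open scoped ComplexOrder

/-- Projection onto the nonnegative eigenspace of a Hermitian matrix
(junk value `0` if the matrix is not Hermitian). -/
noncomputable def posProj {n : Type*} [Fintype n] [DecidableEq n]
    (X : Matrix n n ℂ) : Matrix n n ℂ :=
  if hX : X.IsHermitian then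
    (hX.eigenvectorUnitary : Matrix n n ℂ) *
      Matrix.diagonal (fun i => if (0:ℝ) ≤ hX.eigenvalues i then (1:ℂ) else 0) *
      star (hX.eigenvectorUnitary : Matrix n n ℂ)
  else 0

/-- Functional calculus logarithm of a Hermitian matrix, with the convention `log 0 = 0`
(junk value `0` if the matrix is not Hermitian). -/
noncomputable def matLog {n : Type*} [Fintype n] [DecidableEq n]
    (M : Matrix n n ℂ) : Matrix n n ℂ :=
  if hM : M.IsHermitian then
    (hM.eigenvectorUnitary : Matrix n n ℂ) *
      Matrix.diagonal (fun i => (Real.log (hM.eigenvalues i) : ℂ)) *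
      star (hM.eigenvectorUnitary : Matrix n n ℂ)
  else 0

/-- von Neumann entropy `-Tr[M log M] = -∑ λᵢ log λᵢ` (convention `0 log 0 = 0`). -/
noncomputable def vNEntropy {n : Type*} [Fintype n] [DecidableEq n]
    (M : Matrix n n ℂ) : ℝ :=
  if hM : M.IsHermitian then -∑ i, hM.eigenvalues i * Real.log (hM.eigenvalues i) else 0

/-- A density operator: positive semidefinite with unit trace. -/
def IsDensityOp {n : Type*} [Fintype n] [DecidableEq n] (ρ : Matrix n n ℂ) : Prop :=
  ρ.PosSemidef ∧ ρ.trace = 1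

/-- Partial trace over the first tensor factor. -/
noncomputable def traceA {a b : ℕ} (M : Matrix (Fin a × Fin b) (Fin a × Fin b) ℂ) :
    Matrix (Fin b) (Fin b) ℂ :=
  Matrix.of fun j j' => ∑ i, M (i, j) (i, j')

/-- Partial trace over the second tensor factor. -/
noncomputable def traceB {a b : ℕ} (M : Matrix (Fin a × Fin b) (Fin a × Fin b) ℂ) :
    Matrix (Fin a) (Fin a) ℂ :=
  Matrix.of fun i i' => ∑ j, M (i, j) (i', j)

/-- `n`-fold tensor (Kronecker) power of a matrix. -/
noncomputable def tensorPow {d : ℕ} (ϑ : Matrix (Fin d) (Fin d) ℂ) (n : ℕ) :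
    Matrix (Fin n → Fin d) (Fin n → Fin d) ℂ :=
  Matrix.of fun f g => ∏ i, ϑ (f i) (g i)

section Aux
variable {n : Type*} [Fintype n] [DecidableEq n]

lemma posProj_eq {X : Matrix n n ℂ} (hX : X.IsHermitian) :
    posProj X = (hX.eigenvectorUnitary : Matrix n n ℂ) *
      Matrix.diagonal (fun i => if (0:ℝ) ≤ hX.eigenvalues i then (1:ℂ) else 0) *
      star (hX.eigenvectorUnitary : Matrix n n ℂ) := dif_pos hX

lemma posProj_posSemidef {X : Matrix n n ℂ} (hX : X.IsHermitian) :
    (posProj X).PosSemidef := by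
  rw [posProj_eq hX]
  exact (Matrix.PosSemidef.diagonal (by intro i; dsimp; split <;> norm_num)).mul_mul_conjTranspose_same _

lemma one_sub_posProj_posSemidef {X : Matrix n n ℂ} (hX : X.IsHermitian) :
    (1 - posProj X).PosSemidef := by
  have hU : (hX.eigenvectorUnitary : Matrix n n ℂ) * star (hX.eigenvectorUnitary : Matrix n n ℂ) = 1 :=
    Matrix.mem_unitaryGroup_iff.mp hX.eigenvectorUnitary.2
  have : (1 : Matrix n n ℂ) - posProj X =
      (hX.eigenvectorUnitary : Matrix n n ℂ) *
      Matrix.diagonal (fun i => 1 - if (0:ℝ) ≤ hX.eigenvalues i then (1:ℂ) else 0) *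
      star (hX.eigenvectorUnitary : Matrix n n ℂ) := by
    rw [posProj_eq hX]
    have : Matrix.diagonal (fun i => 1 - if (0:ℝ) ≤ hX.eigenvalues i then (1:ℂ) else 0)
        = 1 - Matrix.diagonal (fun i => if (0:ℝ) ≤ hX.eigenvalues i then (1:ℂ) else 0) := by
      rw [← Matrix.diagonal_one, Matrix.diagonal_sub]
    rw [this, Matrix.mul_sub, Matrix.sub_mul, Matrix.mul_one, hU]
  rw [this]
  exact (Matrix.PosSemidef.diagonal (by intro i; dsimp; split <;> norm_num)).mul_mul_conjTranspose_same _

lemma psd_diag_re_nonneg {M : Matrix n n ℂ} (hM : M.PosSemidef) (i : n) :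
    0 ≤ (M i i).re := by
  have := hM.re_dotProduct_nonneg (Pi.single i 1)
  simpa [dotProduct, Matrix.mulVec, Pi.single_apply] using this

lemma key_ineq {X Q : Matrix n n ℂ} (hX : X.IsHermitian)
    (hQ : Q.PosSemidef) (hQ1 : (1 - Q).PosSemidef) :
    ((Q * X).trace).re ≤ ∑ i, max (hX.eigenvalues i) 0 := by
  set U : Matrix n n ℂ := (hX.eigenvectorUnitary : Matrix n n ℂ) with hUdef
  have hU : U * star U = 1 := Matrix.mem_unitaryGroup_iff.mp hX.eigenvectorUnitary.2
  have hU' : star U * U = 1 := Matrix.mem_unitaryGroup_iff'.mp hX.eigenvectorUnitary.2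
  set M : Matrix n n ℂ := star U * Q * U with hMdef
  have hM : M.PosSemidef := by
    have := hQ.conjTranspose_mul_mul_same U
    simpa [hMdef, Matrix.star_eq_conjTranspose] using this
  have hUH : Uᴴ * U = 1 := by simpa [Matrix.star_eq_conjTranspose] using hU'
  have hM1 : ((1 : Matrix n n ℂ) - M).PosSemidef := by
    have h2 := hQ1.conjTranspose_mul_mul_same U
    have he : Uᴴ * (1 - Q) * U = Uᴴ * U - Uᴴ * Q * U := by noncomm_ring
    rw [he, hUH] at h2
    simpa [hMdef, Matrix.star_eq_conjTranspose] using h2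
  have htr : (Q * X).trace = ∑ i, M i i * (hX.eigenvalues i : ℂ) := by
    set D : Matrix n n ℂ := Matrix.diagonal (RCLike.ofReal ∘ hX.eigenvalues) with hDdef
    have h1 : Q * X = (Q * U * D) * star U := by
      conv_lhs => rw [hX.spectral_theorem, Unitary.conjStarAlgAut_apply]
      rw [← hUdef, ← hDdef]; noncomm_ring
    have h2 : star U * (Q * U * D) = M * D := by rw [hMdef]; noncomm_ring
    rw [h1, Matrix.trace_mul_comm, h2]
    simp [Matrix.trace, Matrix.mul_diagonal, Matrix.diag, hDdef, Function.comp]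
  rw [htr]
  rw [Complex.re_sum]
  apply Finset.sum_le_sum
  intro i _
  have h1 : 0 ≤ (M i i).re := psd_diag_re_nonneg hM i
  have h2 : (M i i).re ≤ 1 := by
    have := psd_diag_re_nonneg hM1 i
    simp only [Matrix.sub_apply, Matrix.one_apply_eq, Complex.sub_re, Complex.one_re] at this
    linarith
  have : (M i i * (hX.eigenvalues i : ℂ)).re = (M i i).re * hX.eigenvalues i := by
    simp [Complex.mul_re]
  rw [this]
  rcases le_or_gt 0 (hX.eigenvalues i) with h | h
  · calc (M i i).re * hX.eigenvalues i ≤ 1 * hX.eigenvalues i := by nlinarith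
    _ = hX.eigenvalues i := one_mul _
    _ ≤ max (hX.eigenvalues i) 0 := le_max_left _ _
  · calc (M i i).re * hX.eigenvalues i ≤ 0 := by nlinarith
    _ ≤ max (hX.eigenvalues i) 0 := le_max_right _ _

lemma trace_posProj_mul {X : Matrix n n ℂ} (hX : X.IsHermitian) :
    ((posProj X * X).trace).re = ∑ i, max (hX.eigenvalues i) 0 := by
  set U : Matrix n n ℂ := (hX.eigenvectorUnitary : Matrix n n ℂ) with hUdef
  have hU' : star U * U = 1 := Matrix.mem_unitaryGroup_iff'.mp hX.eigenvectorUnitary.2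
  set D1 : Matrix n n ℂ := Matrix.diagonal (fun i => if (0:ℝ) ≤ hX.eigenvalues i then (1:ℂ) else 0) with hD1
  set D2 : Matrix n n ℂ := Matrix.diagonal (RCLike.ofReal ∘ hX.eigenvalues) with hD2
  have hXY : X = U * D2 * star U := by rw [hUdef, hD2]; exact hX.spectral_theorem
  have h0 : posProj X * X = (U * D1 * star U) * (U * D2 * star U) := by
    rw [posProj_eq hX, ← hUdef, ← hD1]
    exact congrArg (fun Z => U * D1 * star U * Z) hXY
  have h1 : posProj X * X = (U * D1 * (star U * U) * D2) * star U := by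
    rw [h0]; noncomm_ring
  have h2 : star U * (U * D1 * (star U * U) * D2) = D1 * D2 := by
    rw [hU']
    have : star U * (U * D1 * 1 * D2) = (star U * U) * (D1 * D2) := by noncomm_ring
    rw [this, hU', Matrix.one_mul]
  rw [h1, Matrix.trace_mul_comm, h2, hD1, hD2, Matrix.diagonal_mul_diagonal,
    Matrix.trace_diagonal, Complex.re_sum]
  apply Finset.sum_congr rfl
  intro i _
  by_cases h : (0:ℝ) ≤ hX.eigenvalues i
  · simp [h, max_eq_left h]
  · simp [h, max_eq_right (le_of_not_ge h)]

lemma posSemidef_sum {ι : Type*} (s : Finset ι) (f : ι → Matrix n n ℂ)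
    (h : ∀ i ∈ s, (f i).PosSemidef) : (∑ i ∈ s, f i).PosSemidef := by
  classical
  induction s using Finset.induction with
  | empty => simpa using Matrix.PosSemidef.zero
  | insert a s hx ih =>
    rw [Finset.sum_insert hx]
    exact ((h _ (Finset.mem_insert_self _ _)).add (ih fun i hi => h i (Finset.mem_insert_of_mem hi)))

end Aux

theorem positive_part_trace_monotone_cptp {h k m : ℕ}
    (A B : Matrix (Fin h) (Fin h) ℂ) (hA : A.IsHermitian) (hB : B.IsHermitian)
    (K : Fin m → Matrix (Fin k) (Fin h) ℂ)
    (hK : ∑ i, (K i)ᴴ * K i = 1)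
    (T : Matrix (Fin h) (Fin h) ℂ → Matrix (Fin k) (Fin k) ℂ)
    (hT : ∀ X, T X = ∑ i, K i * X * (K i)ᴴ) :
    ((posProj (T A - T B) * (T A - T B)).trace).re
      ≤ ((posProj (A - B) * (A - B)).trace).re := by
  set X := A - B with hXdef
  have hX : X.IsHermitian := hA.sub hB
  have hYeq : T A - T B = ∑ i, K i * X * (K i)ᴴ := by
    rw [hT, hT, ← Finset.sum_sub_distrib]
    congr 1; ext i
    rw [hXdef, Matrix.mul_sub, Matrix.sub_mul]
  set Y := T A - T B with hYdef
  have hY : Y.IsHermitian := by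
    rw [hYeq]
    unfold Matrix.IsHermitian
    rw [Matrix.conjTranspose_sum]
    apply Finset.sum_congr rfl
    intro i _
    exact Matrix.isHermitian_mul_mul_conjTranspose _ hX
  set P := posProj Y with hPdef
  have hP : P.PosSemidef := posProj_posSemidef hY
  have hP1 : ((1 : Matrix (Fin k) (Fin k) ℂ) - P).PosSemidef := one_sub_posProj_posSemidef hY
  set Q : Matrix (Fin h) (Fin h) ℂ := ∑ i, (K i)ᴴ * P * K i with hQdef
  have hQ : Q.PosSemidef :=
    posSemidef_sum _ _ (fun i _ => hP.conjTranspose_mul_mul_same (K i))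
  have hQ1 : ((1 : Matrix (Fin h) (Fin h) ℂ) - Q).PosSemidef := by
    have : (1 : Matrix (Fin h) (Fin h) ℂ) - Q = ∑ i, (K i)ᴴ * (1 - P) * K i := by
      rw [hQdef, ← hK, ← Finset.sum_sub_distrib]
      congr 1; ext i
      rw [Matrix.mul_sub, Matrix.sub_mul, Matrix.mul_one]
    rw [this]
    exact posSemidef_sum _ _ (fun i _ => hP1.conjTranspose_mul_mul_same (K i))
  have htr : (P * Y).trace = (Q * X).trace := by
    rw [hYeq, Finset.mul_sum, Matrix.trace_sum, hQdef, Finset.sum_mul, Matrix.trace_sum]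
    congr 1; ext i
    rw [show P * (K i * X * (K i)ᴴ) = (P * K i * X) * (K i)ᴴ by
        rw [← Matrix.mul_assoc, ← Matrix.mul_assoc],
      Matrix.trace_mul_cycle]
    congr 1
    simp only [Matrix.mul_assoc]
  calc ((posProj Y * Y).trace).re = ((P * Y).trace).re := rfl
    _ = ((Q * X).trace).re := by rw [htr]
    _ ≤ ∑ i, max (hX.eigenvalues i) 0 := key_ineq hX hQ hQ1
    _ = ((posProj X * X).trace).re := (trace_posProj_mul hX).symm
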